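/- If α, β > 0 and 1 ≤ α − β ≤ 2, then for every positive integer n, n^(−(α−β)) ∑_{m=1}^n m^(α−β−1) + n^(α+β) ∑_{m=n+1}^∞ m^(−α−β−1) ≤ 1/(α−β) + 1/(α+β) + α/(6n²) − n^(−(α−β))/12. -/

import Mathlib

open scoped BigOperators

noncomputable section

namespace EMaux

/-- derivative of `t ↦ (1+t)^p` -/
lemma hasDerivAt_op (p t : ℝ) (ht : (-1:ℝ) < t) :
    HasDerivAt (fun s : ℝ => (1+s) ^ p) (p * (1+t) ^ (p-1)) t := by
  have h1 : (0:ℝ) < 1 + t := by linarith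
  have h := (Real.hasDerivAt_rpow_const (x := 1+t) (p := p) (Or.inl h1.ne')).comp t
    ((hasDerivAt_id t).const_add 1)
  simp at h
  exact h

def Df (a t : ℝ) : ℝ :=
  ((1+t)^a - 1)/a - t/2*((1+t)^(a-1) + 1) + (a-1)*t^2/12*((1+t)^(a-2) - 1)

def Df' (a t : ℝ) : ℝ :=
  (1+t)^(a-1)/2 - 1/2 - (a-1)*t/6 - (a-1)*t*(1+t)^(a-2)/3
    + (a-1)*(a-2)*t^2*(1+t)^(a-3)/12

def Vf (a t : ℝ) : ℝ :=
  ((1+t)^(a-2) - 1)/6 - (a-2)*t*(1+t)^(a-3)/6 + (a-2)*(a-3)*t^2*(1+t)^(a-4)/12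

def Vf' (a t : ℝ) : ℝ := (a-2)*(a-3)*(a-4)*t^2*(1+t)^(a-5)/12

lemma hasDerivAt_Vf (a t : ℝ) (ht : (-1:ℝ) < t) :
    HasDerivAt (Vf a) (Vf' a t) t := by
  have h2 := hasDerivAt_op (a-2) t ht
  have h3 := hasDerivAt_op (a-3) t ht
  have h4 := hasDerivAt_op (a-4) t ht
  rw [show a-2-1 = a-3 by ring] at h2
  rw [show a-3-1 = a-4 by ring] at h3
  rw [show a-4-1 = a-5 by ring] at h4
  have H := (((h2.sub_const 1).div_const 6).sub
      (((hasDerivAt_id t).const_mul ((a-2))).mul h3 |>.div_const 6)).add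
      ((((hasDerivAt_id t).pow 2).const_mul ((a-2)*(a-3))).mul h4 |>.div_const 12)
  refine H.congr_deriv ?_
  simp only [id_eq, Pi.pow_apply] at H ⊢
  unfold Vf'
  ring


lemma hasDerivAt_Df' (a t : ℝ) (ht : (-1:ℝ) < t) :
    HasDerivAt (Df' a) ((a-1) * Vf a t) t := by
  have h1 := hasDerivAt_op (a-1) t ht
  have h2 := hasDerivAt_op (a-2) t ht
  have h3 := hasDerivAt_op (a-3) t ht
  rw [show a-1-1 = a-2 by ring] at h1
  rw [show a-2-1 = a-3 by ring] at h2
  rw [show a-3-1 = a-4 by ring] at h3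
  have H := ((((h1.div_const 2).sub_const (1/2)).sub
      (((hasDerivAt_id t).const_mul (a-1)).div_const 6)).sub
      ((((hasDerivAt_id t).const_mul (a-1)).mul h2).div_const 3)).add
      ((((hasDerivAt_id t).pow 2).const_mul ((a-1)*(a-2))).mul h3 |>.div_const 12)
  refine H.congr_deriv ?_
  simp only [id_eq, Pi.pow_apply]
  unfold Vf
  ring

lemma hasDerivAt_Df (a t : ℝ) (ha : a ≠ 0) (ht : (-1:ℝ) < t) :
    HasDerivAt (Df a) (Df' a t) t := by
  have h0 := hasDerivAt_op a t ht
  have h1 := hasDerivAt_op (a-1) t ht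
  have h2 := hasDerivAt_op (a-2) t ht
  rw [show a-1-1 = a-2 by ring] at h1
  rw [show a-2-1 = a-3 by ring] at h2
  have H := (((h0.sub_const 1).div_const a).sub
      ((((hasDerivAt_id t).div_const 2).mul (h1.add_const 1)))).add
      ((((hasDerivAt_id t).pow 2).const_mul (a-1) |>.div_const 12).mul (h2.sub_const 1))
  refine H.congr_deriv ?_
  simp only [id_eq, Pi.pow_apply]
  unfold Df'
  field_simp
  ring

lemma nonneg_of_deriv {f f' : ℝ → ℝ}
    (hd : ∀ t ∈ Set.Icc (0:ℝ) 1, HasDerivAt f (f' t) t)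
    (h0 : f 0 = 0) (hp : ∀ t ∈ Set.Icc (0:ℝ) 1, 0 ≤ f' t)
    {t : ℝ} (ht : t ∈ Set.Icc (0:ℝ) 1) : 0 ≤ f t := by
  have mono : MonotoneOn f (Set.Icc (0:ℝ) 1) := by
    apply monotoneOn_of_deriv_nonneg (convex_Icc _ _)
    · exact fun x hx => (hd x hx).continuousAt.continuousWithinAt
    · intro x hx
      rw [interior_Icc] at hx
      exact ((hd x (Set.Ioo_subset_Icc_self hx)).differentiableAt).differentiableWithinAt
    · intro x hx
      rw [interior_Icc] at hx
      rw [(hd x (Set.Ioo_subset_Icc_self hx)).deriv]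
      exact hp x (Set.Ioo_subset_Icc_self hx)
  calc (0:ℝ) = f 0 := h0.symm
  _ ≤ f t := mono (Set.left_mem_Icc.2 zero_le_one) ht ht.1

lemma Df_zero (a : ℝ) : Df a 0 = 0 := by simp [Df]
lemma Df'_zero (a : ℝ) : Df' a 0 = 0 := by simp [Df']
lemma Vf_zero (a : ℝ) : Vf a 0 = 0 := by simp [Vf]

/-- Tail-side kernel positivity: `0 ≤ Df (-b) t` for `b > 0`, `t ∈ [0,1]`. -/
lemma tail_kernel {b : ℝ} (hb : 0 < b) {t : ℝ} (ht : t ∈ Set.Icc (0:ℝ) 1) :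
    0 ≤ Df (-b) t := by
  have hm1 : ∀ s ∈ Set.Icc (0:ℝ) 1, (-1:ℝ) < s := fun s hs => by
    have := hs.1; linarith
  have hV : ∀ s ∈ Set.Icc (0:ℝ) 1, Vf (-b) s ≤ 0 := by
    intro s hs
    have h := nonneg_of_deriv (f := fun u => -(Vf (-b) u)) (f' := fun u => -(Vf' (-b) u))
      (fun u hu => (hasDerivAt_Vf (-b) u (hm1 u hu)).neg)
      (by simp [Vf_zero])
      (fun u hu => by
        show 0 ≤ -(Vf' (-b) u)
        have hx : (0:ℝ) < 1 + u := by have := hu.1; linarith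
        have : -(Vf' (-b) u) = (b+2)*(b+3)*(b+4)*u^2*(1+u)^(-b-5)/12 := by
          unfold Vf'
          rw [show (-b)-5 = -b-5 by ring]
          ring
        rw [this]
        positivity) hs
    linarith
  have hD' : ∀ s ∈ Set.Icc (0:ℝ) 1, 0 ≤ Df' (-b) s := by
    intro s hs
    refine nonneg_of_deriv (f' := fun u => ((-b)-1) * Vf (-b) u)
      (fun u hu => hasDerivAt_Df' (-b) u (hm1 u hu)) (Df'_zero _) ?_ hs
    intro u hu
    show 0 ≤ ((-b)-1) * Vf (-b) u
    have := hV u hu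
    nlinarith
  exact nonneg_of_deriv (f' := Df' (-b))
    (fun u hu => hasDerivAt_Df (-b) u (by intro h; rw [neg_eq_zero] at h; exact hb.ne' h)
      (hm1 u hu)) (Df_zero _) hD' ht

/-- Sum-side kernel bound: `0 ≤ Df a t + (a-1)*(2-a)*t^5/120` for `1 ≤ a ≤ 2`, `t ∈ [0,1]`. -/
lemma sum_kernel {a : ℝ} (ha1 : 1 ≤ a) (ha2 : a ≤ 2) {t : ℝ}
    (ht : t ∈ Set.Icc (0:ℝ) 1) :
    0 ≤ Df a t + (a-1)*(2-a)*t^5/120 := by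
  have hm1 : ∀ s ∈ Set.Icc (0:ℝ) 1, (-1:ℝ) < s := fun s hs => by
    have := hs.1; linarith
  have hV : ∀ s ∈ Set.Icc (0:ℝ) 1, 0 ≤ Vf a s + (2-a)*s^3/6 := by
    intro s hs
    refine nonneg_of_deriv (f := fun u => Vf a u + (2-a)*u^3/6)
      (f' := fun u => Vf' a u + (2-a)*u^2/2) ?_ (by simp [Vf_zero]) ?_ hs
    · intro u hu
      have := (hasDerivAt_Vf a u (hm1 u hu)).add
        ((((hasDerivAt_id u).pow 3).const_mul (2-a)).div_const 6)
      refine this.congr_deriv ?_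
      simp only [id_eq]
      ring
    · intro u hu
      show 0 ≤ Vf' a u + (2-a)*u^2/2
      have hx : (0:ℝ) < 1 + u := by have := hu.1; linarith
      have hle : (1+u)^(a-5) ≤ 1 :=
        Real.rpow_le_one_of_one_le_of_nonpos (by linarith [hu.1]) (by linarith)
      have hge : (0:ℝ) ≤ (1+u)^(a-5) := le_of_lt (Real.rpow_pos_of_pos hx _)
      have hu2 : (0:ℝ) ≤ u^2 := sq_nonneg u
      have hfac : (0:ℝ) ≤ (2-a)*(3-a)*(4-a) :=
        mul_nonneg (mul_nonneg (by linarith) (by linarith)) (by linarith)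
      have key : (2-a)*(3-a)*(4-a)*((1+u)^(a-5)) ≤ (2-a)*6 := by
        have k1 : (2-a)*(3-a)*(4-a)*((1+u)^(a-5)) ≤ (2-a)*(3-a)*(4-a)*1 :=
          mul_le_mul_of_nonneg_left hle hfac
        nlinarith [mul_nonneg (mul_nonneg (by linarith : (0:ℝ) ≤ 2-a)
          (by linarith : (0:ℝ) ≤ a-1)) (by linarith : (0:ℝ) ≤ 6-a)]
      unfold Vf'
      nlinarith [mul_le_mul_of_nonneg_right key hu2]
  have hD' : ∀ s ∈ Set.Icc (0:ℝ) 1, 0 ≤ Df' a s + (a-1)*(2-a)*s^4/24 := by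
    intro s hs
    refine nonneg_of_deriv (f := fun u => Df' a u + (a-1)*(2-a)*u^4/24)
      (f' := fun u => (a-1) * Vf a u + (a-1)*(2-a)*u^3/6) ?_ (by simp [Df'_zero]) ?_ hs
    · intro u hu
      have := (hasDerivAt_Df' a u (hm1 u hu)).add
        ((((hasDerivAt_id u).pow 4).const_mul ((a-1)*(2-a))).div_const 24)
      refine this.congr_deriv ?_
      simp only [id_eq]
      ring
    · intro u hu
      show 0 ≤ (a-1) * Vf a u + (a-1)*(2-a)*u^3/6
      have h := hV u hu
      have ha1' : (0:ℝ) ≤ a - 1 := by linarith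
      nlinarith
  refine nonneg_of_deriv (f := fun u => Df a u + (a-1)*(2-a)*u^5/120)
    (f' := fun u => Df' a u + (a-1)*(2-a)*u^4/24) ?_ (by simp [Df_zero]) ?_ ht
  · intro u hu
    have := (hasDerivAt_Df a u (by linarith) (hm1 u hu)).add
      ((((hasDerivAt_id u).pow 5).const_mul ((a-1)*(2-a))).div_const 120)
    refine this.congr_deriv ?_
    simp only [id_eq]
    ring
  · exact fun u hu => hD' u hu

lemma rpow_succ_base {M : ℝ} (hM0 : 0 < M) (p : ℝ) :
    (M+1) ^ p = M ^ p * (1+M⁻¹) ^ p := by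
  rw [← Real.mul_rpow hM0.le (by positivity)]
  rw [mul_add, mul_inv_cancel₀ hM0.ne', mul_one]

lemma rpow_shift {M : ℝ} (hM0 : 0 < M) (p : ℝ) (k : ℕ) :
    M ^ (p - k) = M ^ p * (M⁻¹) ^ (k:ℕ) := by
  rw [Real.rpow_sub hM0, Real.rpow_natCast, div_eq_mul_inv, inv_pow]

/-- Per-interval inequality, tail side. -/
lemma per_interval_tail {b M : ℝ} (hb : 0 < b) (hM : 1 ≤ M) :
    (M+1) ^ (-b-1) ≤
      (M ^ (-b)/b - M ^ (-b-1)/2 + (b+1)*M ^ (-b-2)/12)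
      - ((M+1) ^ (-b)/b - (M+1) ^ (-b-1)/2 + (b+1)*(M+1) ^ (-b-2)/12) := by
  have hM0 : (0:ℝ) < M := lt_of_lt_of_le one_pos hM
  have htI : M⁻¹ ∈ Set.Icc (0:ℝ) 1 := ⟨by positivity, by
    rw [inv_le_one_iff₀]; right; exact hM⟩
  have hker := tail_kernel hb htI
  have hMa : (0:ℝ) < M ^ (-b) := Real.rpow_pos_of_pos hM0 _
  have key : 0 ≤ M ^ (-b) * Df (-b) M⁻¹ := mul_nonneg hMa.le hker
  have e0 : (M+1) ^ (-b) = M ^ (-b) * (1+M⁻¹) ^ (-b) := rpow_succ_base hM0 _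
  have e1 : (M+1) ^ (-b-1) = M ^ (-b-1) * (1+M⁻¹) ^ (-b-1) := rpow_succ_base hM0 _
  have e2 : (M+1) ^ (-b-2) = M ^ (-b-2) * (1+M⁻¹) ^ (-b-2) := rpow_succ_base hM0 _
  have f1 : M ^ (-b-1) = M ^ (-b) * (M⁻¹) ^ (1:ℕ) := by
    have := rpow_shift hM0 (-b) 1; rw [show (-b) - (1:ℕ) = -b-1 by norm_num] at this
    exact this
  have f2 : M ^ (-b-2) = M ^ (-b) * (M⁻¹) ^ (2:ℕ) := by
    have := rpow_shift hM0 (-b) 2; rw [show (-b) - (2:ℕ) = -b-2 by norm_num] at this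
    exact this
  rw [e0, e1, e2, f1, f2]
  unfold Df at key
  rw [show (-b) - 1 = -b-1 by ring, show (-b) - 2 = -b-2 by ring,
    show (((1 + M⁻¹) ^ (-b) - 1) / (-b)) = ((1 - (1 + M⁻¹) ^ (-b)) / b) by
      rw [div_neg, ← neg_div, neg_sub]] at key
  rw [← sub_nonneg]
  refine le_of_le_of_eq key ?_
  have hb' : b ≠ 0 := hb.ne'
  have hMne : M ≠ 0 := hM0.ne'
  field_simp
  ring

/-- Per-interval inequality, sum side. -/
lemma per_interval_sum {a M : ℝ} (ha1 : 1 ≤ a) (ha2 : a ≤ 2) (hM : 1 ≤ M) :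
    (M+1) ^ (a-1) ≤
      ((M+1) ^ a/a + (M+1) ^ (a-1)/2 + (a-1)*(M+1) ^ (a-2)/12)
      - (M ^ a/a + M ^ (a-1)/2 + (a-1)*M ^ (a-2)/12)
      + (a-1)*(2-a)*M ^ (a-5)/120 := by
  have hM0 : (0:ℝ) < M := lt_of_lt_of_le one_pos hM
  have htI : M⁻¹ ∈ Set.Icc (0:ℝ) 1 := ⟨by positivity, by
    rw [inv_le_one_iff₀]; right; exact hM⟩
  have hker := sum_kernel ha1 ha2 htI
  have hMa : (0:ℝ) < M ^ a := Real.rpow_pos_of_pos hM0 _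
  have key : 0 ≤ M ^ a * (Df a M⁻¹ + (a-1)*(2-a)*(M⁻¹)^5/120) := mul_nonneg hMa.le hker
  have e0 : (M+1) ^ a = M ^ a * (1+M⁻¹) ^ a := rpow_succ_base hM0 _
  have e1 : (M+1) ^ (a-1) = M ^ (a-1) * (1+M⁻¹) ^ (a-1) := rpow_succ_base hM0 _
  have e2 : (M+1) ^ (a-2) = M ^ (a-2) * (1+M⁻¹) ^ (a-2) := rpow_succ_base hM0 _
  have f1 : M ^ (a-1) = M ^ a * (M⁻¹) ^ (1:ℕ) := by
    have := rpow_shift hM0 a 1; rw [show a - (1:ℕ) = a-1 by norm_num] at this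
    exact this
  have f2 : M ^ (a-2) = M ^ a * (M⁻¹) ^ (2:ℕ) := by
    have := rpow_shift hM0 a 2; rw [show a - (2:ℕ) = a-2 by norm_num] at this
    exact this
  have f5 : M ^ (a-5) = M ^ a * (M⁻¹) ^ (5:ℕ) := by
    have := rpow_shift hM0 a 5; rw [show a - (5:ℕ) = a-5 by norm_num] at this
    exact this
  rw [e0, e1, e2, f1, f2, f5]
  unfold Df at key
  have ha0 : a ≠ 0 := by linarith
  rw [← sub_nonneg]
  refine le_of_le_of_eq key ?_
  have hMne : M ≠ 0 := hM0.ne'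
  field_simp
  ring

lemma sum_bound {a : ℝ} (ha1 : 1 ≤ a) (ha2 : a ≤ 2) (n : ℕ) (hn : 1 ≤ n) :
    ∑ m ∈ Finset.Icc 1 n, (m:ℝ)^(a-1)
      ≤ (n:ℝ)^a/a + (n:ℝ)^(a-1)/2 + (a-1)*(n:ℝ)^(a-2)/12 - 1/12
        - (a-1)*(2-a)/90 * (((n:ℝ)^2)⁻¹) := by
  have ha0 : (0:ℝ) < a := by linarith
  induction n, hn using Nat.le_induction with
  | base =>
      rw [Finset.Icc_self, Finset.sum_singleton]
      norm_num [Real.one_rpow]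
      rw [← sub_nonneg]
      have e : a⁻¹ + 1/2 + (a-1)/12 - 1/12 - (a-1)*(2-a)/90 - 1
          = ((2-a)*(30*(6-a) - 4*a*(a-1)))/(360*a) := by
        field_simp
        ring
      rw [e]
      apply div_nonneg ?_ (by positivity)
      apply mul_nonneg (by linarith)
      nlinarith
  | succ n hn ih =>
      rw [Finset.sum_Icc_succ_top (by omega : 1 ≤ n+1)]
      have hM : (1:ℝ) ≤ (n:ℝ) := by exact_mod_cast hn
      have hM0 : (0:ℝ) < (n:ℝ) := by linarith
      set M : ℝ := (n:ℝ) with hMdef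
      have hcast : ((n+1:ℕ):ℝ) = M + 1 := by push_cast; ring
      rw [hcast]
      have hpi := per_interval_sum ha1 ha2 hM
      have hr1 : M ^ (a-5) ≤ ((M^3)⁻¹) := by
        have h1 : M ^ (a-5) ≤ M ^ (-3:ℝ) :=
          Real.rpow_le_rpow_of_exponent_le hM (by linarith)
        have h2 : M ^ (-3:ℝ) = (M^3)⁻¹ := by
          rw [show (-3:ℝ) = -((3:ℕ):ℝ) by norm_num, Real.rpow_neg hM0.le,
            Real.rpow_natCast]
        linarith [h1, h2.le, h2.ge]
      have hr2 : (M^3)⁻¹ ≤ 4/3 * ((M^2)⁻¹ - ((M+1)^2)⁻¹) := by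
        rw [← sub_nonneg]
        have e : 4/3 * ((M^2)⁻¹ - ((M+1)^2)⁻¹) - (M^3)⁻¹
            = (5*M+3)*(M-1)/(3*M^3*(M+1)^2) := by
          field_simp
          ring
        rw [e]
        apply div_nonneg (by nlinarith) (by positivity)
      have hc : (0:ℝ) ≤ (a-1)*(2-a) :=
        mul_nonneg (by linarith) (by linarith)
      have hr3 : (a-1)*(2-a)/120 * (M ^ (a-5)) ≤
          (a-1)*(2-a)/90 * ((M^2)⁻¹ - ((M+1)^2)⁻¹) := by
        have := mul_le_mul_of_nonneg_left (hr1.trans hr2) (by linarith : (0:ℝ) ≤ (a-1)*(2-a)/120)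
        calc (a-1)*(2-a)/120 * (M ^ (a-5))
            ≤ (a-1)*(2-a)/120 * (4/3 * ((M^2)⁻¹ - ((M+1)^2)⁻¹)) := this
          _ ≤ (a-1)*(2-a)/90 * ((M^2)⁻¹ - ((M+1)^2)⁻¹) := by
              rw [← sub_nonneg]
              have e2 : (a-1)*(2-a)/90 * ((M^2)⁻¹ - ((M+1)^2)⁻¹)
                  - (a-1)*(2-a)/120 * (4/3 * ((M^2)⁻¹ - ((M+1)^2)⁻¹)) = 0 := by ring
              rw [e2]
      linarith [ih, hpi, hr3]

lemma tail_phi_nonneg {b : ℝ} (hb : 0 < b) {x : ℝ} (hx : 1 ≤ x) :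
    0 ≤ x^(-b)/b - x^(-b-1)/2 + (b+1)*x^(-b-2)/12 := by
  have hx0 : (0:ℝ) < x := by linarith
  have f1 : x ^ (-b-1) = x ^ (-b) * (x⁻¹) ^ (1:ℕ) := by
    have := rpow_shift hx0 (-b) 1
    rw [show (-b) - ((1:ℕ):ℝ) = -b-1 by norm_num] at this
    exact this
  have f2 : x ^ (-b-2) = x ^ (-b) * (x⁻¹) ^ (2:ℕ) := by
    have := rpow_shift hx0 (-b) 2
    rw [show (-b) - ((2:ℕ):ℝ) = -b-2 by norm_num] at this
    exact this
  rw [f1, f2]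
  have hX : (0:ℝ) < x ^ (-b) := Real.rpow_pos_of_pos hx0 _
  have hu : (0:ℝ) < x⁻¹ := by positivity
  have key : 0 ≤ 1/b - x⁻¹/2 + (b+1)*(x⁻¹)^2/12 := by
    have e : 1/b - x⁻¹/2 + (b+1)*(x⁻¹)^2/12
        = (12 - 6*b*x⁻¹ + b*(b+1)*(x⁻¹)^2)/(12*b) := by
      field_simp
      ring
    rw [e]
    apply div_nonneg ?_ (by positivity)
    nlinarith [sq_nonneg (b * x⁻¹ - 3), mul_pos hb (mul_pos hu hu)]
  calc (0:ℝ) = x ^ (-b) * 0 := by ring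
  _ ≤ x ^ (-b) * (1/b - x⁻¹/2 + (b+1)*(x⁻¹)^2/12) :=
      mul_le_mul_of_nonneg_left key hX.le
  _ = x ^ (-b)/b - x ^ (-b) * (x⁻¹)^(1:ℕ)/2 + (b+1)*(x ^ (-b) * (x⁻¹)^(2:ℕ))/12 := by
      ring

lemma tail_bound {b : ℝ} (hb : 0 < b) (n : ℕ) (hn : 1 ≤ n) (M : ℕ) :
    ∑ k ∈ Finset.range M, (((k+n+1:ℕ)):ℝ)^(-b-1)
      ≤ (n:ℝ)^(-b)/b - (n:ℝ)^(-b-1)/2 + (b+1)*(n:ℝ)^(-b-2)/12 := by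
  have main : ∀ K : ℕ, ∑ k ∈ Finset.range K, (((k+n+1:ℕ)):ℝ)^(-b-1)
      ≤ ((n:ℝ)^(-b)/b - (n:ℝ)^(-b-1)/2 + (b+1)*(n:ℝ)^(-b-2)/12)
        - (((n+K:ℕ):ℝ)^(-b)/b - ((n+K:ℕ):ℝ)^(-b-1)/2 + (b+1)*((n+K:ℕ):ℝ)^(-b-2)/12) := by
    intro K
    induction K with
    | zero => simp
    | succ K ih =>
        rw [Finset.sum_range_succ]
        have hX1 : (1:ℝ) ≤ ((n+K:ℕ):ℝ) := by
          have : 1 ≤ n + K := by omega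
          exact_mod_cast this
        have hpi := per_interval_tail hb hX1
        have ec1 : ((K+n+1:ℕ):ℝ) = ((n+K:ℕ):ℝ) + 1 := by push_cast; ring
        have ec2 : ((n+(K+1):ℕ):ℝ) = ((n+K:ℕ):ℝ) + 1 := by push_cast; ring
        rw [ec1, ec2]
        linarith
  have h0 := main M
  have hX1 : (1:ℝ) ≤ ((n+M:ℕ):ℝ) := by
    have : 1 ≤ n + M := by omega
    exact_mod_cast this
  have := tail_phi_nonneg hb hX1
  linarith

end EMaux

/-- Euler–Maclaurin type estimate: for `α, β > 0` with `1 ≤ α - β ≤ 2` and every `n ≥ 1`,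
`n^(-(α-β)) ∑_{m=1}^n m^(α-β-1) + n^(α+β) ∑_{m=n+1}^∞ m^(-α-β-1)
  ≤ 1/(α-β) + 1/(α+β) + α/(6n²) - n^(-(α-β))/12`. -/
theorem euler_maclaurin_estimate (α β : ℝ) (hα : 0 < α) (hβ : 0 < β)
    (h1 : 1 ≤ α - β) (h2 : α - β ≤ 2) (n : ℕ) (hn : 0 < n) :
    (n : ℝ) ^ (-(α - β)) * ∑ m ∈ Finset.Icc 1 n, (m : ℝ) ^ (α - β - 1)
      + (n : ℝ) ^ (α + β) * ∑' m : ℕ, ((m + n + 1 : ℕ) : ℝ) ^ (-α - β - 1)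
    ≤ 1 / (α - β) + 1 / (α + β) + α / (6 * (n : ℝ) ^ 2)
        - (n : ℝ) ^ (-(α - β)) / 12 := by
  have hn1 : 1 ≤ n := hn
  have hn0 : (0:ℝ) < (n:ℝ) := by exact_mod_cast hn
  have hnR1 : (1:ℝ) ≤ (n:ℝ) := by exact_mod_cast hn1
  have hb : (0:ℝ) < α + β := by linarith
  -- sum side
  have hS := EMaux.sum_bound h1 h2 n hn1
  have hkap : 0 ≤ (α - β - 1)*(2-(α-β))/90 * (((n:ℝ)^2)⁻¹) := by
    apply mul_nonneg (by nlinarith) (by positivity)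
  have hS' : ∑ m ∈ Finset.Icc 1 n, (m:ℝ)^(α-β-1)
      ≤ (n:ℝ)^(α-β)/(α-β) + (n:ℝ)^(α-β-1)/2 + (α-β-1)*(n:ℝ)^(α-β-2)/12 - 1/12 := by
    have := hS
    linarith [hkap, this]
  -- tail side
  have htail0 : (∑' m : ℕ, ((m + n + 1 : ℕ) : ℝ) ^ (-α - β - 1))
      = ∑' m : ℕ, ((m + n + 1 : ℕ) : ℝ) ^ (-(α+β) - 1) := by
    congr 1
    funext m
    rw [show (-α - β - 1 : ℝ) = -(α+β)-1 by ring]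
  have hT : (∑' m : ℕ, ((m + n + 1 : ℕ) : ℝ) ^ (-(α+β) - 1))
      ≤ (n:ℝ)^(-(α+β))/(α+β) - (n:ℝ)^(-(α+β)-1)/2 + ((α+β)+1)*(n:ℝ)^(-(α+β)-2)/12 := by
    apply Real.tsum_le_of_sum_range_le
    · intro m
      positivity
    · intro M
      exact EMaux.tail_bound hb n hn1 M
  -- multiply
  have hma : (0:ℝ) ≤ (n:ℝ) ^ (-(α-β)) := (Real.rpow_pos_of_pos hn0 _).le
  have hmb : (0:ℝ) ≤ (n:ℝ) ^ (α+β) := (Real.rpow_pos_of_pos hn0 _).le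
  have hsum_nonneg : 0 ≤ ∑ m ∈ Finset.Icc 1 n, (m:ℝ)^(α-β-1) := by
    apply Finset.sum_nonneg
    intro m hm
    positivity
  have hL1 : (n : ℝ) ^ (-(α - β)) * ∑ m ∈ Finset.Icc 1 n, (m : ℝ) ^ (α - β - 1)
      ≤ (n : ℝ) ^ (-(α - β)) *
        ((n:ℝ)^(α-β)/(α-β) + (n:ℝ)^(α-β-1)/2 + (α-β-1)*(n:ℝ)^(α-β-2)/12 - 1/12) :=
    mul_le_mul_of_nonneg_left hS' hma
  have hL2 : (n : ℝ) ^ (α + β) * ∑' m : ℕ, ((m + n + 1 : ℕ) : ℝ) ^ (-α - β - 1)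
      ≤ (n : ℝ) ^ (α+β) *
        ((n:ℝ)^(-(α+β))/(α+β) - (n:ℝ)^(-(α+β)-1)/2 + ((α+β)+1)*(n:ℝ)^(-(α+β)-2)/12) := by
    rw [htail0]
    exact mul_le_mul_of_nonneg_left hT hmb
  -- rpow algebra
  have gmul : ∀ p q : ℝ, (n:ℝ) ^ p * (n:ℝ) ^ q = (n:ℝ) ^ (p + q) :=
    fun p q => (Real.rpow_add hn0 p q).symm
  have g0 : ∀ p : ℝ, p + (-p) = 0 := fun p => by ring
  have gna : (n:ℝ) ^ (-(α-β)) * (n:ℝ) ^ (α-β) = 1 := by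
    rw [gmul, show -(α-β) + (α-β) = 0 by ring, Real.rpow_zero]
  have gn1 : (n:ℝ) ^ (-(α-β)) * (n:ℝ) ^ (α-β-1) = ((n:ℝ))⁻¹ := by
    rw [gmul, show -(α-β) + (α-β-1) = -1 by ring, Real.rpow_neg_one]
  have gn2 : (n:ℝ) ^ (-(α-β)) * (n:ℝ) ^ (α-β-2) = (((n:ℝ))^2)⁻¹ := by
    rw [gmul, show -(α-β) + (α-β-2) = -((2:ℕ):ℝ) by push_cast; ring, Real.rpow_neg hn0.le,
      Real.rpow_natCast]
  have gb0 : (n:ℝ) ^ (α+β) * (n:ℝ) ^ (-(α+β)) = 1 := by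
    rw [gmul, show (α+β) + -(α+β) = 0 by ring, Real.rpow_zero]
  have gb1 : (n:ℝ) ^ (α+β) * (n:ℝ) ^ (-(α+β)-1) = ((n:ℝ))⁻¹ := by
    rw [gmul, show (α+β) + (-(α+β)-1) = -1 by ring, Real.rpow_neg_one]
  have gb2 : (n:ℝ) ^ (α+β) * (n:ℝ) ^ (-(α+β)-2) = (((n:ℝ))^2)⁻¹ := by
    rw [gmul, show (α+β) + (-(α+β)-2) = -((2:ℕ):ℝ) by push_cast; ring, Real.rpow_neg hn0.le,
      Real.rpow_natCast]
  have e1 : (n : ℝ) ^ (-(α - β)) *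
      ((n:ℝ)^(α-β)/(α-β) + (n:ℝ)^(α-β-1)/2 + (α-β-1)*(n:ℝ)^(α-β-2)/12 - 1/12)
      = 1/(α-β) + ((n:ℝ))⁻¹/2 + (α-β-1)*(((n:ℝ))^2)⁻¹/12 - (n:ℝ)^(-(α-β))/12 := by
    linear_combination gna/(α-β) + gn1/2 + (α-β-1)*gn2/12
  have e2 : (n : ℝ) ^ (α+β) *
      ((n:ℝ)^(-(α+β))/(α+β) - (n:ℝ)^(-(α+β)-1)/2 + ((α+β)+1)*(n:ℝ)^(-(α+β)-2)/12)
      = 1/(α+β) - ((n:ℝ))⁻¹/2 + ((α+β)+1)*(((n:ℝ))^2)⁻¹/12 := by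
    linear_combination gb0/(α+β) - gb1/2 + ((α+β)+1)*gb2/12
  rw [e1] at hL1
  rw [e2] at hL2
  have efin : 1/(α-β) + ((n:ℝ))⁻¹/2 + (α-β-1)*(((n:ℝ))^2)⁻¹/12 - (n:ℝ)^(-(α-β))/12
      + (1/(α+β) - ((n:ℝ))⁻¹/2 + ((α+β)+1)*(((n:ℝ))^2)⁻¹/12)
      = 1 / (α - β) + 1 / (α + β) + α / (6 * (n : ℝ) ^ 2)
        - (n : ℝ) ^ (-(α - β)) / 12 := by
    have hn2 : ((n:ℝ))^2 ≠ 0 := by positivity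
    field_simp
    ring
  linarith [hL1, hL2, efin.ge, efin.le]

end
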